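/- Let K be a field and I, J, x ∈ K with x ≠ 0, I ≠ 0 and x² − Jx + J ≠ 0. Define y = I(x − J)/(x² − Jx + J) and z = IJ/(x² − Jx + J). Then xy + z = I and xz/(y + z) = J. -/

import Mathlib

/-- Explicit rational parametrization of the invariant curve
`{xy + z = I, xz/(y+z) = J}`. -/
theorem stmt_19 {K : Type*} [Field K] (I J x : K)
    (hx : x ≠ 0) (hI : I ≠ 0) (hd : x ^ 2 - J * x + J ≠ 0) :
    let y := I * (x - J) / (x ^ 2 - J * x + J)
    let z := I * J / (x ^ 2 - J * x + J)
    x * y + z = I ∧ x * z / (y + z) = J := by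
  intro y z
  have hyz : y + z = I * x / (x ^ 2 - J * x + J) := by
    simp only [y, z]
    field_simp
    ring
  constructor
  · simp only [y, z]
    rw [mul_div_assoc', ← add_div, div_eq_iff hd]
    ring
  · rw [hyz]
    simp only [z]
    have hne : I * x / (x ^ 2 - J * x + J) ≠ 0 :=
      div_ne_zero (mul_ne_zero hI hx) hd
    rw [div_eq_iff hne]
    field_simp
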